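/- Let H be a finite hypergraph, k ≥ 1 an integer, and run the parallel k-stripping process on H with levels S_1, S_2, …. For a vertex v ∈ S_i, define the set R(v) = R_i(v) ∪ R_{i−1}(v) ∪ … ∪ R_1(v) as follows: set R'_i(v) = {v}, and for j = i down to 1: (a) R_j(v) is the union of the vertex sets of all connected components of the auxiliary hypergraph 𝒮_j that contain a vertex of R'_j(v); (b) R'_{j−1}(v) is the set of all vertices of S_{j−1} that share an edge of H_{j−1} with some vertex of R_i(v) ∪ … ∪ R_j(v). Then R(v) contains a k-stripping sequence ending with v: there is a k-stripping sequence of H, all of whose vertices lie in R(v), whose last vertex is v. -/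

import Mathlib

variable {V : Type} [Fintype V] [DecidableEq V]

/-- The degree of `v` in the hypergraph with edge family `E` after the vertices of `R`
(together with all edges meeting `R`) have been deleted. -/
def degIn (E : Finset (Finset V)) (R : Finset V) (v : V) : ℕ :=
  (E.filter fun e => v ∈ e ∧ e ∩ R = ∅).card

/-- The set of not-yet-removed vertices whose current degree is less than `k`. -/
def lowSet (k : ℕ) (E : Finset (Finset V)) (R : Finset V) : Finset V :=
  Finset.univ.filter fun v => v ∉ R ∧ degIn E R v < k

/-- `removedSet k E n` is the set of vertices removed during the first `n` iterations of
the parallel `k`-stripping process; `levelSet k E t = lowSet k E (removedSet k E t)` is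
the set `S_{t+1}` of vertices removed during iteration `t+1`. -/
def removedSet (k : ℕ) (E : Finset (Finset V)) : ℕ → Finset V
  | 0 => ∅
  | n + 1 => removedSet k E n ∪ lowSet k E (removedSet k E n)

/-- The set `S_{t+1}` of vertices removed during iteration `t+1` of the parallel
`k`-stripping process. -/
def levelSet (k : ℕ) (E : Finset (Finset V)) (t : ℕ) : Finset V :=
  lowSet k E (removedSet k E t)

/-- A `k`-stripping sequence: a list of distinct vertices such that each vertex has
degree less than `k` at the moment of its removal. -/
def IsStrippingSeq (k : ℕ) (E : Finset (Finset V)) (L : List V) : Prop :=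
  L.Nodup ∧ ∀ j : Fin L.length, degIn E (L.take j).toFinset (L.get j) < k

/-- Adjacency in the auxiliary hypergraph `𝒮_{t+1}`: `u` and `w` are vertices of
`S_{t+1}` lying in a common edge of the hypergraph remaining at the start of
iteration `t+1` (an edge of `H_{t+1}`, i.e. an edge of `E` disjoint from
`removedSet k E t`). -/
def adjS (k : ℕ) (E : Finset (Finset V)) (t : ℕ) (u w : V) : Prop :=
  ∃ f ∈ E, f ∩ removedSet k E t = ∅ ∧ u ∈ f ∧ w ∈ f ∧
    u ∈ levelSet k E t ∧ w ∈ levelSet k E t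

/-- The union of the vertex sets of all connected components of the auxiliary
hypergraph `𝒮_{t+1}` that contain a vertex of `X`. -/
def compClosure (k : ℕ) (E : Finset (Finset V)) (t : ℕ) (X : Set V) : Set V :=
  {w | w ∈ levelSet k E t ∧ ∃ x ∈ X, Relation.ReflTransGen (adjS k E t) x w}

/-- For a vertex `v ∈ S_{i+1}` (0-based level `i`), `RpRR k E i v m = (R'_{i-m}, U_m)`
where, in 0-based indexing, `R'` is the auxiliary set of Definition of `R(v)` and
`U_m = R_i ∪ R_{i-1} ∪ ⋯ ∪ R_{i-m}` is the union of the component closures computed so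
far; in particular `(RpRR k E i v i).2 = R(v)`. -/
def RpRR (k : ℕ) (E : Finset (Finset V)) (i : ℕ) (v : V) : ℕ → Set V × Set V
  | 0 => ({v}, compClosure k E i {v})
  | m + 1 =>
    let U := (RpRR k E i v m).2
    let Rp' : Set V := {u | u ∈ levelSet k E (i - (m + 1)) ∧
      ∃ f ∈ E, f ∩ removedSet k E (i - (m + 1)) = ∅ ∧ u ∈ f ∧ ∃ w ∈ f, w ∈ U}
    (Rp', U ∪ compClosure k E (i - (m + 1)) Rp')

/-! ### Auxiliary lemmas -/

lemma removedSet_mono (k : ℕ) (E : Finset (Finset V)) {m n : ℕ} (h : m ≤ n) :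
    removedSet k E m ⊆ removedSet k E n := by
  induction n with
  | zero => simp [Nat.le_zero.mp h]
  | succ n ih =>
    rcases Nat.lt_or_ge m (n+1) with h' | h'
    · exact (ih (Nat.lt_succ_iff.mp h')).trans (by simp [removedSet, Finset.subset_union_left])
    · have : m = n + 1 := le_antisymm h h'
      subst this; exact subset_rfl

lemma levelSet_subset_removedSet (k : ℕ) (E : Finset (Finset V)) (t : ℕ) :
    levelSet k E t ⊆ removedSet k E (t + 1) := by
  simp [levelSet, removedSet, Finset.subset_union_right]

lemma not_mem_removedSet_of_mem_levelSet {k : ℕ} {E : Finset (Finset V)} {t : ℕ} {w : V}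
    (hw : w ∈ levelSet k E t) : w ∉ removedSet k E t := by
  simp only [levelSet, lowSet, Finset.mem_filter] at hw
  exact hw.2.1

lemma levelSet_eq_of_mem {k : ℕ} {E : Finset (Finset V)} {t t' : ℕ} {w : V}
    (h : w ∈ levelSet k E t) (h' : w ∈ levelSet k E t') : t = t' := by
  by_contra hne
  rcases Nat.lt_or_ge t t' with hlt | hge
  · exact not_mem_removedSet_of_mem_levelSet h'
      (removedSet_mono k E hlt ((levelSet_subset_removedSet k E t) h))
  · have hlt : t' < t := lt_of_le_of_ne hge (Ne.symm hne)
    exact not_mem_removedSet_of_mem_levelSet h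
      (removedSet_mono k E hlt ((levelSet_subset_removedSet k E t') h'))

lemma mem_removedSet_iff {k : ℕ} {E : Finset (Finset V)} {n : ℕ} {w : V} :
    w ∈ removedSet k E n ↔ ∃ t < n, w ∈ levelSet k E t := by
  induction n with
  | zero => simp [removedSet]
  | succ n ih =>
    simp only [removedSet, Finset.mem_union, ih]
    constructor
    · rintro (⟨t, ht, hw⟩ | hw)
      · exact ⟨t, ht.trans (Nat.lt_succ_self n), hw⟩
      · exact ⟨n, Nat.lt_succ_self n, hw⟩
    · rintro ⟨t, ht, hw⟩
      rcases Nat.lt_or_ge t n with h' | h'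
      · exact Or.inl ⟨t, h', hw⟩
      · have : t = n := le_antisymm (Nat.lt_succ_iff.mp ht) h'
        subst this; exact Or.inr hw

lemma degIn_lt_of_levelSet {k : ℕ} {E : Finset (Finset V)} {t : ℕ} {u : V}
    (hu : u ∈ levelSet k E t) (T : Finset V)
    (hT : ∀ e ∈ E, u ∈ e → (e ∩ removedSet k E t).Nonempty → (e ∩ T).Nonempty) :
    degIn E T u < k := by
  have h1 : degIn E T u ≤ degIn E (removedSet k E t) u := by
    apply Finset.card_le_card
    intro e he
    simp only [Finset.mem_filter] at he ⊢
    refine ⟨he.1, he.2.1, ?_⟩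
    by_contra hne
    rcases hT e he.1 he.2.1 (Finset.nonempty_iff_ne_empty.mpr hne) with ⟨x, hx⟩
    rw [he.2.2] at hx
    exact absurd hx (Finset.notMem_empty x)
  have h2 : degIn E (removedSet k E t) u < k := by
    simp only [levelSet, lowSet, Finset.mem_filter] at hu
    exact hu.2.2
  exact lt_of_le_of_lt h1 h2

lemma compClosure_subset_levelSet (k : ℕ) (E : Finset (Finset V)) (t : ℕ) (X : Set V) :
    compClosure k E t X ⊆ {w | w ∈ levelSet k E t} := fun _ hw => hw.1

lemma RpRR_snd_mono (k : ℕ) (E : Finset (Finset V)) (i : ℕ) (v : V) {m n : ℕ} (h : m ≤ n) :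
    (RpRR k E i v m).2 ⊆ (RpRR k E i v n).2 := by
  induction n with
  | zero => simp [Nat.le_zero.mp h]
  | succ n ih =>
    rcases Nat.lt_or_ge m (n+1) with h' | h'
    · refine (ih (Nat.lt_succ_iff.mp h')).trans ?_
      intro x hx
      exact Or.inl hx
    · have : m = n + 1 := le_antisymm h h'
      subst this; exact subset_rfl

lemma mem_RpRR_level {k : ℕ} {E : Finset (Finset V)} {i : ℕ} {v : V} {m : ℕ} {w : V}
    (hw : w ∈ (RpRR k E i v m).2) :
    ∃ m' ≤ m, w ∈ levelSet k E (i - m') ∧ w ∈ (RpRR k E i v m').2 := by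
  induction m with
  | zero =>
    exact ⟨0, le_rfl, by simpa using hw.1, hw⟩
  | succ m ih =>
    rcases hw with hw | hw
    · rcases ih hw with ⟨m', hm', h1, h2⟩
      exact ⟨m', hm'.trans (Nat.le_succ m), h1, h2⟩
    · exact ⟨m + 1, le_rfl, hw.1, Or.inr hw⟩

/-- The key closure property: if `u ∈ R(v)` lies in level `j ≤ i` and an edge `e ∋ u`
meets the removed set before level `j`, then `e` contains a vertex of `R(v)` of a
strictly smaller level. -/
lemma RpRR_closure {k : ℕ} {E : Finset (Finset V)} {i : ℕ} {v : V} {j : ℕ} {u : V}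
    (hji : j ≤ i) (hu : u ∈ (RpRR k E i v i).2) (huj : u ∈ levelSet k E j)
    {e : Finset V} (he : e ∈ E) (hue : u ∈ e)
    (hmeet : (e ∩ removedSet k E j).Nonempty) :
    ∃ w ∈ e, ∃ l < j, w ∈ levelSet k E l ∧ w ∈ (RpRR k E i v i).2 := by
  classical
  -- find the minimal level among vertices of `e` inside `removedSet k E j`
  have hex : ∃ l, l < j ∧ ∃ w ∈ e, w ∈ levelSet k E l := by
    rcases hmeet with ⟨x, hx⟩
    rw [Finset.mem_inter] at hx
    rcases mem_removedSet_iff.mp hx.2 with ⟨t, ht, hxt⟩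
    exact ⟨t, ht, x, hx.1, hxt⟩
  let l := Nat.find hex
  obtain ⟨hlj, w, hwe, hwl⟩ := Nat.find_spec hex
  -- `e` is disjoint from `removedSet k E l`
  have hdisj : e ∩ removedSet k E l = ∅ := by
    by_contra hne
    rcases Finset.nonempty_iff_ne_empty.mpr hne with ⟨x, hx⟩
    rw [Finset.mem_inter] at hx
    rcases mem_removedSet_iff.mp hx.2 with ⟨t, ht, hxt⟩
    exact Nat.find_min hex ht ⟨lt_trans ht hlj, x, hx.1, hxt⟩
  -- identify the step at which level `l` is processed
  have hli : l < i := lt_of_lt_of_le hlj hji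
  have h1 : 1 ≤ i - l := by omega
  set m : ℕ := i - l - 1 with hm
  have hml : i - (m + 1) = l := by omega
  -- `u` belongs to `U_m`
  have humem : u ∈ (RpRR k E i v m).2 := by
    rcases mem_RpRR_level hu with ⟨m', hm', hlev, hmem⟩
    have : i - m' = j := levelSet_eq_of_mem hlev huj
    have : m' ≤ m := by omega
    exact RpRR_snd_mono k E i v this hmem
  -- `w` lies in `R'` at step `m+1`, hence in the component closure at level `l`
  have hwRp : w ∈ (RpRR k E i v (m + 1)).1 := by
    show w ∈ levelSet k E (i - (m+1)) ∧ _
    rw [hml]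
    exact ⟨hwl, e, he, hdisj, hwe, u, hue, humem⟩
  have hwU : w ∈ (RpRR k E i v (m + 1)).2 := by
    refine Or.inr ⟨by rw [hml]; exact hwl, w, hwRp, Relation.ReflTransGen.refl⟩
  have hmi : m + 1 ≤ i := by omega
  exact ⟨w, hwe, l, hlj, hwl, RpRR_snd_mono k E i v hmi hwU⟩

/-- A list sorted by a rank function `g`, all of whose elements have degree `< k` once
everything of smaller rank has been removed, is a stripping sequence. -/
lemma isStrippingSeq_of_sorted {k : ℕ} {E : Finset (Finset V)} (g : V → ℕ) (L : List V)
    (hnd : L.Nodup) (hsort : L.Pairwise fun a b => g a ≤ g b)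
    (hdeg : ∀ u ∈ L, ∀ T : Finset V, (∀ w ∈ L, g w < g u → w ∈ T) → degIn E T u < k) :
    IsStrippingSeq k E L := by
  refine ⟨hnd, fun j => ?_⟩
  apply hdeg (L.get j) (L.get_mem j)
  intro w hw hlt
  rcases List.mem_iff_get.mp hw with ⟨p, rfl⟩
  have hpj : (p : ℕ) < (j : ℕ) := by
    by_contra hge
    push_neg at hge
    rcases Nat.lt_or_ge (j : ℕ) (p : ℕ) with h' | h'
    · have := List.pairwise_iff_get.mp hsort j p h'
      omega
    · have : (p : ℕ) = (j : ℕ) := le_antisymm h' hge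
      have : p = j := Fin.ext this
      subst this; omega
  rw [List.mem_toFinset]
  have : L.get p = (L.take j).get ⟨p, by simpa [Nat.lt_min] using And.intro hpj p.isLt⟩ := by
    simp [List.getElem_take]
  rw [this]
  exact List.get_mem _ _

/-- `R(v)` contains a `k`-stripping sequence ending with `v`. -/
theorem stmt19 (k : ℕ) (hk : 1 ≤ k) (E : Finset (Finset V)) (hE : ∀ e ∈ E, e.Nonempty)
    (i : ℕ) (v : V) (hv : v ∈ levelSet k E i) :
    ∃ L : List V, IsStrippingSeq k E L ∧ (∀ x ∈ L, x ∈ (RpRR k E i v i).2) ∧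
      L.getLast? = some v := by
  classical
  set U : Set V := (RpRR k E i v i).2 with hU
  -- v ∈ U
  have hvU : v ∈ U := by
    refine RpRR_snd_mono k E i v (Nat.zero_le i) ?_
    exact ⟨hv, v, rfl, Relation.ReflTransGen.refl⟩
  -- the finset of vertices of U
  set F : Finset V := Finset.univ.filter fun w => w ∈ U with hF
  have hmemF : ∀ w, w ∈ F ↔ w ∈ U := by
    intro w; simp [hF]
  -- level function
  have hlevel : ∀ w ∈ U, ∃ t ≤ i, w ∈ levelSet k E t := by
    intro w hw
    rcases mem_RpRR_level hw with ⟨m', hm', hlev, _⟩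
    exact ⟨i - m', Nat.sub_le i m', hlev⟩
  set f : V → ℕ := fun w =>
    if h : ∃ t, w ∈ levelSet k E t then h.choose else 0 with hf
  have hfspec : ∀ {w t}, w ∈ levelSet k E t → f w = t := by
    intro w t hw
    have h : ∃ t, w ∈ levelSet k E t := ⟨t, hw⟩
    simp only [hf, dif_pos h]
    exact levelSet_eq_of_mem h.choose_spec hw
  set g : V → ℕ := fun w => if w = v then i + 1 else f w with hg
  -- build the list
  set L0 : List V := ((F.erase v).toList).mergeSort (fun a b => decide (g a ≤ g b)) with hL0
  set L : List V := L0 ++ [v] with hL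
  have hL0perm : List.Perm L0 ((F.erase v).toList) := List.mergeSort_perm _ _
  have hmemL0 : ∀ x, x ∈ L0 ↔ x ∈ F.erase v := by
    intro x
    rw [hL0perm.mem_iff, Finset.mem_toList]
  have hmemL : ∀ x, x ∈ L ↔ x ∈ F := by
    intro x
    simp only [hL, List.mem_append, List.mem_singleton, hmemL0, Finset.mem_erase]
    constructor
    · rintro (⟨_, h⟩ | rfl)
      · exact h
      · exact (hmemF _).mpr hvU
    · intro h
      by_cases hx : x = v
      · exact Or.inr hx
      · exact Or.inl ⟨hx, h⟩
  -- a uniform bound: every u in L is in U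
  have hLU : ∀ x ∈ L, x ∈ U := fun x hx => (hmemF x).mp ((hmemL x).mp hx)
  refine ⟨L, ?_, hLU, ?_⟩
  · -- stripping sequence
    apply isStrippingSeq_of_sorted g
    · -- nodup
      rw [hL, List.nodup_append]
      refine ⟨hL0perm.nodup_iff.mpr (Finset.nodup_toList _), List.nodup_singleton v, ?_⟩
      intro a ha b hb hab
      rw [List.mem_singleton] at hb
      subst hb hab
      exact (Finset.mem_erase.mp ((hmemL0 a).mp ha)).1 rfl
    · -- sorted
      rw [hL, List.pairwise_append]
      refine ⟨?_, List.pairwise_singleton _ _, ?_⟩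
      · have := List.pairwise_mergeSort (le := fun a b => decide (g a ≤ g b))
          (fun a b c hab hbc => by
            simp only [decide_eq_true_eq] at *; omega)
          (fun a b => by
            simp only [Bool.or_eq_true, decide_eq_true_eq]; omega)
          ((F.erase v).toList)
        rw [← hL0] at this
        exact this.imp (by simp)
      · intro a ha b hb
        rw [List.mem_singleton] at hb
        rw [hb]
        have hane : a ≠ v := (Finset.mem_erase.mp ((hmemL0 a).mp ha)).1
        have haU : a ∈ U := (hmemF a).mp (Finset.mem_erase.mp ((hmemL0 a).mp ha)).2
        rcases hlevel a haU with ⟨t, hti, hat⟩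
        have h1 : g a = t := by simp only [hg, if_neg hane]; exact hfspec hat
        have h2 : g v = i + 1 := by simp [hg]
        omega
    · -- degree condition
      intro u huL T hT
      have huU : u ∈ U := hLU u huL
      rcases hlevel u huU with ⟨t, hti, hut⟩
      have hgu : t ≤ g u := by
        by_cases huv : u = v
        · subst huv
          have : t = i := levelSet_eq_of_mem hut hv
          subst this
          simp [hg]
        · have : g u = t := by simp only [hg, if_neg huv]; exact hfspec hut
          omega
      apply degIn_lt_of_levelSet hut
      intro e he hue hmeet
      rcases RpRR_closure hti huU hut he hue hmeet with ⟨w, hwe, l, hlt, hwl, hwU⟩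
      have hwne : w ≠ v := by
        intro hwv
        subst hwv
        have : l = i := levelSet_eq_of_mem hwl hv
        omega
      have hgw : g w = l := by simp only [hg, if_neg hwne]; exact hfspec hwl
      have hwT : w ∈ T := by
        apply hT w ((hmemL w).mpr ((hmemF w).mpr hwU))
        omega
      exact ⟨w, Finset.mem_inter.mpr ⟨hwe, hwT⟩⟩
  · -- last element
    rw [hL]
    simp
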